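/- Let Y⃗, S, R be random variables on a common probability space taking values in finite types. Suppose (i) Y⃗ and R are conditionally independent given S, (ii) the map sending each value σ of S with P(S = σ) > 0 to the conditional distribution of Y⃗ given S = σ is injective, and (iii) I[Y⃗ ; R] = I[Y⃗ ; S]. Then H[S | R] = 0; that is, S is almost surely determined by R. -/

import Mathlib

open MeasureTheory Real
open scoped Classical

/-- Probability of an event. -/
noncomputable def pr {Ω : Type*} [MeasurableSpace Ω] (μ : Measure Ω) (A : Set Ω) : ℝ :=
  (μ A).toReal

/-- Conditional probability of `A` given `B`. -/
noncomputable def cpr {Ω : Type*} [MeasurableSpace Ω] (μ : Measure Ω) (A B : Set Ω) : ℝ :=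
  pr μ (A ∩ B) / pr μ B

/-- `X` and `W` are conditionally independent given `Z` (finite-valued form):
for all values, `P(X = x ∧ W = w ∧ Z = z) ⬝ P(Z = z) = P(X = x ∧ Z = z) ⬝ P(W = w ∧ Z = z)`. -/
def CondIndepGiven {Ω α β γ : Type*} [MeasurableSpace Ω] (μ : Measure Ω)
    (X : Ω → α) (Z : Ω → γ) (W : Ω → β) : Prop :=
  ∀ (x : α) (z : γ) (w : β),
    pr μ {ω | X ω = x ∧ W ω = w ∧ Z ω = z} * pr μ {ω | Z ω = z} =
      pr μ {ω | X ω = x ∧ Z ω = z} * pr μ {ω | W ω = w ∧ Z ω = z}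

/-- Shannon entropy (in nats) of a finite-valued random variable. -/
noncomputable def ent {Ω α : Type*} [MeasurableSpace Ω] [Fintype α]
    (μ : Measure Ω) (X : Ω → α) : ℝ :=
  -∑ x, pr μ {ω | X ω = x} * Real.log (pr μ {ω | X ω = x})

/-- Shannon entropy of the conditional distribution of `X` given the event `E`. -/
noncomputable def condEntEvent {Ω α : Type*} [MeasurableSpace Ω] [Fintype α]
    (μ : Measure Ω) (X : Ω → α) (E : Set Ω) : ℝ :=
  -∑ x, cpr μ {ω | X ω = x} E * Real.log (cpr μ {ω | X ω = x} E)

/-- Conditional Shannon entropy `H[X | Y]` of finite-valued random variables. -/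
noncomputable def condEnt {Ω α β : Type*} [MeasurableSpace Ω] [Fintype α] [Fintype β]
    (μ : Measure Ω) (X : Ω → α) (Y : Ω → β) : ℝ :=
  ∑ y, pr μ {ω | Y ω = y} * condEntEvent μ X {ω | Y ω = y}

/-- Mutual information `I[X ; Y] = H[X] - H[X | Y]`. -/
noncomputable def mutInfo {Ω α β : Type*} [MeasurableSpace Ω] [Fintype α] [Fintype β]
    (μ : Measure Ω) (X : Ω → α) (Y : Ω → β) : ℝ :=
  ent μ X - condEnt μ X Y

lemma pr_nonneg' {Ω : Type*} [MeasurableSpace Ω] (μ : Measure Ω) (A : Set Ω) : 0 ≤ pr μ A :=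
  ENNReal.toReal_nonneg

lemma pr_mono' {Ω : Type*} [MeasurableSpace Ω] (μ : Measure Ω) [IsFiniteMeasure μ]
    {A B : Set Ω} (h : A ⊆ B) : pr μ A ≤ pr μ B :=
  ENNReal.toReal_mono (measure_ne_top μ B) (measure_mono h)

lemma pr_sum_fiber {Ω α : Type*} [MeasurableSpace Ω] (μ : Measure Ω) [IsFiniteMeasure μ]
    [Fintype α] [MeasurableSpace α] [MeasurableSingletonClass α]
    (T : Ω → α) (hT : Measurable T) {A : Set Ω} (hA : MeasurableSet A) :
    pr μ A = ∑ t, pr μ (A ∩ T ⁻¹' {t}) := by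
  classical
  have hA' : A = ⋃ t ∈ (Finset.univ : Finset α), A ∩ T ⁻¹' {t} := by
    ext ω; simp
  have hdisj : (↑(Finset.univ : Finset α) : Set α).PairwiseDisjoint
      (fun t => A ∩ T ⁻¹' {t}) := by
    intro i _ j _ hij
    simp only [Function.onFun, Set.disjoint_left]
    rintro ω ⟨_, hi⟩ ⟨_, hj⟩
    simp only [Set.mem_preimage, Set.mem_singleton_iff] at hi hj
    exact hij (by rw [← hi, ← hj])
  have hm : μ A = ∑ t, μ (A ∩ T ⁻¹' {t}) := by
    conv_lhs => rw [hA']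
    rw [measure_biUnion_finset hdisj
      (fun t _ => hA.inter (hT (measurableSet_singleton t)))]
  rw [pr, hm, ENNReal.toReal_sum (fun t _ => measure_ne_top μ _)]
  rfl

lemma log_ge_one_sub_inv {t : ℝ} (ht : 0 < t) : 1 - t⁻¹ ≤ Real.log t := by
  have h := Real.log_le_sub_one_of_pos (inv_pos.mpr ht)
  rw [Real.log_inv] at h
  linarith

lemma term_ineq {a b c d : ℝ} (ha : 0 ≤ a) (hac : a ≤ c) (hab : a ≤ b) (hbd : b ≤ d) :
    a - c * b / d ≤ a * Real.log (a / c) - a * Real.log (b / d) := by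
  have hd0 : 0 ≤ d := le_trans ha (hab.trans hbd)
  rcases hd0.eq_or_lt with hd | hd
  · have hb0 : b = 0 := le_antisymm (hd ▸ hbd) (ha.trans hab)
    have ha0 : a = 0 := le_antisymm (hab.trans_eq hb0) ha
    rw [ha0, hb0, ← hd]
    norm_num
  · rcases ha.eq_or_lt with ha0 | ha0
    · have hb0 : 0 ≤ b := ha.trans hab
      have hc0 : 0 ≤ c := ha.trans hac
      rw [← ha0]
      have : 0 ≤ c * b / d := by positivity
      simp only [zero_mul, sub_zero, zero_sub]
      linarith
    · have hbpos : 0 < b := ha0.trans_le hab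
      have hcpos : 0 < c := ha0.trans_le hac
      have h1 : (a * d) / (c * b) = (a / c) / (b / d) := by field_simp
      have hlog : Real.log ((a * d) / (c * b)) = Real.log (a / c) - Real.log (b / d) := by
        rw [h1]
        exact Real.log_div (div_pos ha0 hcpos).ne' (div_pos hbpos hd).ne'
      have ht : 0 < (a * d) / (c * b) := by positivity
      have hlb := log_ge_one_sub_inv ht
      have hconv : a * (1 - ((a * d) / (c * b))⁻¹) = a - c * b / d := by
        field_simp
      calc a - c * b / d = a * (1 - ((a * d) / (c * b))⁻¹) := hconv.symm
        _ ≤ a * Real.log ((a * d) / (c * b)) :=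
            mul_le_mul_of_nonneg_left hlb ha0.le
        _ = a * Real.log (a / c) - a * Real.log (b / d) := by rw [hlog]; ring

lemma term_eq {a b c d : ℝ} (ha : 0 ≤ a) (hac : a ≤ c) (hab : a ≤ b) (hbd : b ≤ d)
    (hc0 : 0 < c) (hd0 : 0 < d)
    (heq : a * Real.log (a / c) - a * Real.log (b / d) = a - c * b / d) :
    a * d = c * b := by
  rcases ha.eq_or_lt with ha0 | ha0
  · rw [← ha0] at heq ⊢
    norm_num at heq
    rcases heq with (h | h) | h
    · simp [h]
    · simp [h]
    · exact absurd h hd0.ne'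
  · have hbpos : 0 < b := ha0.trans_le hab
    have h1 : (a * d) / (c * b) = (a / c) / (b / d) := by field_simp
    have hlog : Real.log ((a * d) / (c * b)) = Real.log (a / c) - Real.log (b / d) := by
      rw [h1]
      exact Real.log_div (div_pos ha0 hc0).ne' (div_pos hbpos hd0).ne'
    set t : ℝ := (a * d) / (c * b) with ht_def
    have ht : 0 < t := by positivity
    have heq2 : Real.log t = 1 - t⁻¹ := by
      have hA : a * Real.log t = a - c * b / d := by
        rw [hlog]; linarith [heq]
      have hB : a * (1 - t⁻¹) = a - c * b / d := by
        rw [ht_def]; field_simp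
      exact mul_left_cancel₀ ha0.ne' (hA.trans hB.symm)
    by_cases h1 : t = 1
    · have h2 : a * d / (c * b) = 1 := by rw [← ht_def, h1]
      have hcb : (0:ℝ) < c * b := by positivity
      field_simp at h2
      linarith
    · exfalso
      have htne : t⁻¹ ≠ 1 := fun h => h1 (by rw [← inv_inv t, h, inv_one])
      have hinv : Real.log t⁻¹ < t⁻¹ - 1 :=
        Real.log_lt_sub_one_of_pos (inv_pos.mpr ht) htne
      rw [Real.log_inv] at hinv
      linarith [heq2]

lemma core {Bt Ct Dt : Type*} [Fintype Bt] [Fintype Ct] [Fintype Dt]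
    (a : Bt → Ct → Dt → ℝ) (b : Bt → Dt → ℝ) (c : Ct → Dt → ℝ) (d : Dt → ℝ)
    (e : Bt → Ct → ℝ) (f : Ct → ℝ)
    (ha : ∀ y s r, 0 ≤ a y s r)
    (hb : ∀ y r, b y r = ∑ s, a y s r)
    (hc : ∀ s r, c s r = ∑ y, a y s r)
    (hd : ∀ r, d r = ∑ s, c s r)
    (he : ∀ y s, e y s = ∑ r, a y s r)
    (hf : ∀ s, f s = ∑ y, e y s)
    (hCI : ∀ y s r, a y s r * f s = e y s * c s r)
    (hEq : ∑ r, ∑ s, ∑ y, a y s r * Real.log (e y s / f s)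
         = ∑ r, ∑ s, ∑ y, a y s r * Real.log (b y r / d r)) :
    ∀ r s s', 0 < c s r → 0 < c s' r → ∀ y, e y s * f s' = e y s' * f s := by
  have hab : ∀ y s r, a y s r ≤ b y r := fun y s r => by
    rw [hb]; exact Finset.single_le_sum (fun s' _ => ha y s' r) (Finset.mem_univ s)
  have hac : ∀ y s r, a y s r ≤ c s r := fun y s r => by
    rw [hc]; exact Finset.single_le_sum (fun y' _ => ha y' s r) (Finset.mem_univ y)
  have hc0 : ∀ s r, 0 ≤ c s r := fun s r => by
    rw [hc]; exact Finset.sum_nonneg fun y _ => ha y s r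
  have hb0 : ∀ y r, 0 ≤ b y r := fun y r => by
    rw [hb]; exact Finset.sum_nonneg fun s _ => ha y s r
  have he0 : ∀ y s, 0 ≤ e y s := fun y s => by
    rw [he]; exact Finset.sum_nonneg fun r _ => ha y s r
  have hae : ∀ y s r, a y s r ≤ e y s := fun y s r => by
    rw [he]; exact Finset.single_le_sum (fun r' _ => ha y s r') (Finset.mem_univ r)
  have hef : ∀ y s, e y s ≤ f s := fun y s => by
    rw [hf]; exact Finset.single_le_sum (fun y' _ => he0 y' s) (Finset.mem_univ y)
  have hd' : ∀ r, d r = ∑ y, b y r := by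
    intro r; rw [hd]; simp only [hb, hc]; exact Finset.sum_comm
  have hbd : ∀ y r, b y r ≤ d r := fun y r => by
    rw [hd']; exact Finset.single_le_sum (fun y' _ => hb0 y' r) (Finset.mem_univ y)
  have hcd : ∀ s r, c s r ≤ d r := fun s r => by
    rw [hd]; exact Finset.single_le_sum (fun s' _ => hc0 s' r) (Finset.mem_univ s)
  have hcf : ∀ s r, c s r ≤ f s := fun s r => by
    rw [hc, hf]; exact Finset.sum_le_sum fun y _ => hae y s r
  have hd0 : ∀ r, 0 ≤ d r := fun r => by
    rw [hd]; exact Finset.sum_nonneg fun s _ => hc0 s r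
  -- Step 1: rewrite e/f into a/c using conditional independence
  have hEq' : ∑ r, ∑ s, ∑ y, a y s r * Real.log (a y s r / c s r)
      = ∑ r, ∑ s, ∑ y, a y s r * Real.log (b y r / d r) := by
    rw [← hEq]
    refine Finset.sum_congr rfl fun r _ => Finset.sum_congr rfl fun s _ =>
      Finset.sum_congr rfl fun y _ => ?_
    rcases (ha y s r).eq_or_lt with h0 | h0
    · rw [← h0]; ring
    · have hcpos : 0 < c s r := lt_of_lt_of_le h0 (hac y s r)
      have hepos : 0 < e y s := lt_of_lt_of_le h0 (hae y s r)
      have hfpos : 0 < f s := lt_of_lt_of_le hepos (hef y s)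
      have hq : a y s r / c s r = e y s / f s := by
        rw [div_eq_div_iff hcpos.ne' hfpos.ne']
        exact hCI y s r
      rw [hq]
  -- per-r sum of lower bounds is zero
  have hLsum : ∀ r, ∑ s, ∑ y, (a y s r - c s r * b y r / d r) = 0 := by
    intro r
    rcases (hd0 r).eq_or_lt with hdr | hdr
    · refine Finset.sum_eq_zero fun s _ => Finset.sum_eq_zero fun y _ => ?_
      have hall : a y s r = 0 :=
        le_antisymm ((hab y s r).trans ((hbd y r).trans hdr.symm.le)) (ha y s r)
      rw [hall, ← hdr]
      simp
    · refine Finset.sum_eq_zero fun s _ => ?_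
      rw [Finset.sum_sub_distrib, ← hc s r]
      have : ∑ y, c s r * b y r / d r = c s r := by
        rw [← Finset.sum_div, ← Finset.mul_sum, ← hd' r, mul_div_assoc,
          div_self hdr.ne', mul_one]
      rw [this, sub_self]
  have hL0 : ∑ r, ∑ s, ∑ y, (a y s r - c s r * b y r / d r) = 0 :=
    Finset.sum_eq_zero fun r _ => hLsum r
  -- sum of (g - L) is zero, each term nonneg, so each term zero
  have hG : ∑ r, ∑ s, ∑ y,
      ((a y s r * Real.log (a y s r / c s r) - a y s r * Real.log (b y r / d r))
        - (a y s r - c s r * b y r / d r)) = 0 := by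
    simp only [Finset.sum_sub_distrib]
    simp only [Finset.sum_sub_distrib] at hL0
    linarith [hEq', hL0]
  have hnn : ∀ r s y, 0 ≤
      ((a y s r * Real.log (a y s r / c s r) - a y s r * Real.log (b y r / d r))
        - (a y s r - c s r * b y r / d r)) := fun r s y =>
    sub_nonneg.mpr (term_ineq (ha y s r) (hac y s r) (hab y s r) (hbd y r))
  have hterm0 : ∀ r s y,
      (a y s r * Real.log (a y s r / c s r) - a y s r * Real.log (b y r / d r))
        = (a y s r - c s r * b y r / d r) := by
    intro r s y
    have h1 := (Finset.sum_eq_zero_iff_of_nonneg (fun r _ =>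
      Finset.sum_nonneg fun s _ => Finset.sum_nonneg fun y _ => hnn r s y)).mp hG r
      (Finset.mem_univ r)
    have h2 := (Finset.sum_eq_zero_iff_of_nonneg (fun s _ =>
      Finset.sum_nonneg fun y _ => hnn r s y)).mp h1 s (Finset.mem_univ s)
    have h3 := (Finset.sum_eq_zero_iff_of_nonneg (fun y _ => hnn r s y)).mp h2 y
      (Finset.mem_univ y)
    linarith [h3]
  have hkey : ∀ y s r, 0 < c s r → a y s r * d r = c s r * b y r := by
    intro y s r hcs
    have hdd : 0 < d r := lt_of_lt_of_le hcs (hcd s r)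
    exact term_eq (ha y s r) (hac y s r) (hab y s r) (hbd y r) hcs hdd (hterm0 r s y)
  intro r s s' hcs hcs' y
  have hdd : 0 < d r := lt_of_lt_of_le hcs (hcd s r)
  have hfs : 0 < f s := lt_of_lt_of_le hcs (hcf s r)
  have hfs' : 0 < f s' := lt_of_lt_of_le hcs' (hcf s' r)
  have hci := hCI y s r
  have hci' := hCI y s' r
  have hk := hkey y s r hcs
  have hk' := hkey y s' r hcs'
  have h1 : e y s * d r = b y r * f s := by
    have h5 : c s r * (e y s * d r) = c s r * (b y r * f s) := by
      linear_combination (-(d r)) * hci + f s * hk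
    exact mul_left_cancel₀ hcs.ne' h5
  have h2 : e y s' * d r = b y r * f s' := by
    have h5 : c s' r * (e y s' * d r) = c s' r * (b y r * f s') := by
      linear_combination (-(d r)) * hci' + f s' * hk'
    exact mul_left_cancel₀ hcs'.ne' h5
  have h6 : (e y s * f s') * d r = (e y s' * f s) * d r := by
    linear_combination f s' * h1 - f s * h2
  exact mul_right_cancel₀ hdd.ne' h6

/-- Suppose (i) `Yfut` and `R` are conditionally independent given `S`,
(ii) distinct values of `S` of positive probability have distinct conditional distributions of
`Yfut`, and (iii) `I[Yfut ; R] = I[Yfut ; S]`. Then `H[S | R] = 0`: `S` is almost surely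
determined by `R`. -/
theorem equality_case_determines_causal_state
    {Ω B C D : Type*} [MeasurableSpace Ω]
    [MeasurableSpace B] [DiscreteMeasurableSpace B] [Fintype B] [Nonempty B]
    [MeasurableSpace C] [DiscreteMeasurableSpace C] [Fintype C] [Nonempty C]
    [MeasurableSpace D] [DiscreteMeasurableSpace D] [Fintype D] [Nonempty D]
    (μ : Measure Ω) [IsProbabilityMeasure μ]
    (Yfut : Ω → B) (S : Ω → C) (R : Ω → D)
    (hYfut : Measurable Yfut) (hS : Measurable S) (hR : Measurable R)
    (hCI : CondIndepGiven μ Yfut S R)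
    (hinj : ∀ σ σ' : C, 0 < pr μ {ω | S ω = σ} → 0 < pr μ {ω | S ω = σ'} →
      (∀ y : B, cpr μ {ω | Yfut ω = y} {ω | S ω = σ} =
        cpr μ {ω | Yfut ω = y} {ω | S ω = σ'}) → σ = σ')
    (hMI : mutInfo μ Yfut R = mutInfo μ Yfut S) :
    condEnt μ S R = 0 := by
  -- measurability of basic sets
  have mY : ∀ y : B, MeasurableSet {ω | Yfut ω = y} := fun y =>
    hYfut (measurableSet_singleton y)
  have mS : ∀ s : C, MeasurableSet {ω | S ω = s} := fun s =>
    hS (measurableSet_singleton s)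
  have mR : ∀ r : D, MeasurableSet {ω | R ω = r} := fun r =>
    hR (measurableSet_singleton r)
  have mYR : ∀ (y : B) (r : D), MeasurableSet {ω | Yfut ω = y ∧ R ω = r} := fun y r =>
    (mY y).inter (mR r)
  have mYS : ∀ (y : B) (s : C), MeasurableSet {ω | Yfut ω = y ∧ S ω = s} := fun y s =>
    (mY y).inter (mS s)
  have mSR : ∀ (s : C) (r : D), MeasurableSet {ω | S ω = s ∧ R ω = r} := fun s r =>
    (mS s).inter (mR r)
  -- marginal decompositions
  have hb : ∀ (y : B) (r : D), pr μ {ω | Yfut ω = y ∧ R ω = r}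
      = ∑ s, pr μ {ω | Yfut ω = y ∧ S ω = s ∧ R ω = r} := by
    intro y r
    rw [pr_sum_fiber μ S hS (mYR y r)]
    refine Finset.sum_congr rfl fun s _ => ?_
    congr 1
    ext ω
    simp only [Set.mem_inter_iff, Set.mem_preimage, Set.mem_singleton_iff, Set.mem_setOf_eq]
    tauto
  have hc : ∀ (s : C) (r : D), pr μ {ω | S ω = s ∧ R ω = r}
      = ∑ y, pr μ {ω | Yfut ω = y ∧ S ω = s ∧ R ω = r} := by
    intro s r
    rw [pr_sum_fiber μ Yfut hYfut (mSR s r)]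
    refine Finset.sum_congr rfl fun y _ => ?_
    congr 1
    ext ω
    simp only [Set.mem_inter_iff, Set.mem_preimage, Set.mem_singleton_iff, Set.mem_setOf_eq]
    tauto
  have hd : ∀ r : D, pr μ {ω | R ω = r} = ∑ s, pr μ {ω | S ω = s ∧ R ω = r} := by
    intro r
    rw [pr_sum_fiber μ S hS (mR r)]
    refine Finset.sum_congr rfl fun s _ => ?_
    congr 1
    ext ω
    simp only [Set.mem_inter_iff, Set.mem_preimage, Set.mem_singleton_iff, Set.mem_setOf_eq]
    tauto
  have he : ∀ (y : B) (s : C), pr μ {ω | Yfut ω = y ∧ S ω = s}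
      = ∑ r, pr μ {ω | Yfut ω = y ∧ S ω = s ∧ R ω = r} := by
    intro y s
    rw [pr_sum_fiber μ R hR (mYS y s)]
    refine Finset.sum_congr rfl fun r _ => ?_
    congr 1
    ext ω
    simp only [Set.mem_inter_iff, Set.mem_preimage, Set.mem_singleton_iff, Set.mem_setOf_eq]
    tauto
  have hf : ∀ s : C, pr μ {ω | S ω = s} = ∑ y, pr μ {ω | Yfut ω = y ∧ S ω = s} := by
    intro s
    rw [pr_sum_fiber μ Yfut hYfut (mS s)]
    refine Finset.sum_congr rfl fun y _ => ?_
    congr 1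
    ext ω
    simp only [Set.mem_inter_iff, Set.mem_preimage, Set.mem_singleton_iff, Set.mem_setOf_eq]
    tauto
  -- conditional independence in rearranged form
  have hCI' : ∀ (y : B) (s : C) (r : D),
      pr μ {ω | Yfut ω = y ∧ S ω = s ∧ R ω = r} * pr μ {ω | S ω = s}
        = pr μ {ω | Yfut ω = y ∧ S ω = s} * pr μ {ω | S ω = s ∧ R ω = r} := by
    intro y s r
    have h := hCI y s r
    have e1 : {ω | Yfut ω = y ∧ R ω = r ∧ S ω = s}
        = {ω | Yfut ω = y ∧ S ω = s ∧ R ω = r} := by ext ω; simp only [Set.mem_setOf_eq]; tauto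
    have e2 : {ω | R ω = r ∧ S ω = s} = {ω | S ω = s ∧ R ω = r} := by
      ext ω; simp only [Set.mem_setOf_eq]; tauto
    rw [e1, e2] at h
    exact h
  -- conditional entropies as explicit sums
  have hcprYR : ∀ (y : B) (r : D), cpr μ {ω | Yfut ω = y} {ω | R ω = r}
      = pr μ {ω | Yfut ω = y ∧ R ω = r} / pr μ {ω | R ω = r} := fun y r => rfl
  have hcprYS : ∀ (y : B) (s : C), cpr μ {ω | Yfut ω = y} {ω | S ω = s}
      = pr μ {ω | Yfut ω = y ∧ S ω = s} / pr μ {ω | S ω = s} := fun y s => rfl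
  have hcprSR : ∀ (s : C) (r : D), cpr μ {ω | S ω = s} {ω | R ω = r}
      = pr μ {ω | S ω = s ∧ R ω = r} / pr μ {ω | R ω = r} := fun s r => rfl
  have hCER : condEnt μ Yfut R = -∑ r, ∑ y, pr μ {ω | Yfut ω = y ∧ R ω = r} *
      Real.log (pr μ {ω | Yfut ω = y ∧ R ω = r} / pr μ {ω | R ω = r}) := by
    unfold condEnt condEntEvent
    rw [← Finset.sum_neg_distrib]
    refine Finset.sum_congr rfl fun r _ => ?_
    rcases (pr_nonneg' μ {ω | R ω = r}).eq_or_lt with h0 | h0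
    · have hz : ∀ y, pr μ {ω | Yfut ω = y ∧ R ω = r} = 0 := fun y =>
        le_antisymm ((pr_mono' μ (fun ω hω => hω.2)).trans h0.symm.le) (pr_nonneg' μ _)
      rw [← h0]
      simp [hz]
    · rw [mul_neg, neg_inj, Finset.mul_sum]
      refine Finset.sum_congr rfl fun y _ => ?_
      rw [hcprYR]
      field_simp
  have hCES : condEnt μ Yfut S = -∑ s, ∑ y, pr μ {ω | Yfut ω = y ∧ S ω = s} *
      Real.log (pr μ {ω | Yfut ω = y ∧ S ω = s} / pr μ {ω | S ω = s}) := by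
    unfold condEnt condEntEvent
    rw [← Finset.sum_neg_distrib]
    refine Finset.sum_congr rfl fun s _ => ?_
    rcases (pr_nonneg' μ {ω | S ω = s}).eq_or_lt with h0 | h0
    · have hz : ∀ y, pr μ {ω | Yfut ω = y ∧ S ω = s} = 0 := fun y =>
        le_antisymm ((pr_mono' μ (fun ω hω => hω.2)).trans h0.symm.le) (pr_nonneg' μ _)
      rw [← h0]
      simp [hz]
    · rw [mul_neg, neg_inj, Finset.mul_sum]
      refine Finset.sum_congr rfl fun y _ => ?_
      rw [hcprYS]
      field_simp
  -- triple-sum versions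
  have hCER3 : ∑ r, ∑ y, pr μ {ω | Yfut ω = y ∧ R ω = r} *
      Real.log (pr μ {ω | Yfut ω = y ∧ R ω = r} / pr μ {ω | R ω = r})
      = ∑ r, ∑ s, ∑ y, pr μ {ω | Yfut ω = y ∧ S ω = s ∧ R ω = r} *
        Real.log (pr μ {ω | Yfut ω = y ∧ R ω = r} / pr μ {ω | R ω = r}) := by
    refine Finset.sum_congr rfl fun r _ => ?_
    rw [Finset.sum_comm]
    refine Finset.sum_congr rfl fun y _ => ?_
    rw [hb y r, Finset.sum_mul]
  have hCES3 : ∑ s, ∑ y, pr μ {ω | Yfut ω = y ∧ S ω = s} *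
      Real.log (pr μ {ω | Yfut ω = y ∧ S ω = s} / pr μ {ω | S ω = s})
      = ∑ r, ∑ s, ∑ y, pr μ {ω | Yfut ω = y ∧ S ω = s ∧ R ω = r} *
        Real.log (pr μ {ω | Yfut ω = y ∧ S ω = s} / pr μ {ω | S ω = s}) := by
    have step1 : ∑ s, ∑ y, pr μ {ω | Yfut ω = y ∧ S ω = s} *
        Real.log (pr μ {ω | Yfut ω = y ∧ S ω = s} / pr μ {ω | S ω = s})
        = ∑ s, ∑ y, ∑ r, pr μ {ω | Yfut ω = y ∧ S ω = s ∧ R ω = r} *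
          Real.log (pr μ {ω | Yfut ω = y ∧ S ω = s} / pr μ {ω | S ω = s}) := by
      refine Finset.sum_congr rfl fun s _ => Finset.sum_congr rfl fun y _ => ?_
      rw [he y s, Finset.sum_mul]
    rw [step1]
    rw [show (∑ s : C, ∑ y : B, ∑ r : D, pr μ {ω | Yfut ω = y ∧ S ω = s ∧ R ω = r} *
        Real.log (pr μ {ω | Yfut ω = y ∧ S ω = s} / pr μ {ω | S ω = s}))
        = ∑ s : C, ∑ r : D, ∑ y : B, pr μ {ω | Yfut ω = y ∧ S ω = s ∧ R ω = r} *
        Real.log (pr μ {ω | Yfut ω = y ∧ S ω = s} / pr μ {ω | S ω = s}) from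
      Finset.sum_congr rfl fun s _ => Finset.sum_comm]
    exact Finset.sum_comm
  -- the equality of triple sums required by `core`
  have hMI' : condEnt μ Yfut R = condEnt μ Yfut S := by
    unfold mutInfo at hMI
    linarith
  have hEqcore : ∑ r, ∑ s, ∑ y, pr μ {ω | Yfut ω = y ∧ S ω = s ∧ R ω = r} *
      Real.log (pr μ {ω | Yfut ω = y ∧ S ω = s} / pr μ {ω | S ω = s})
      = ∑ r, ∑ s, ∑ y, pr μ {ω | Yfut ω = y ∧ S ω = s ∧ R ω = r} *
        Real.log (pr μ {ω | Yfut ω = y ∧ R ω = r} / pr μ {ω | R ω = r}) := by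
    rw [← hCES3, ← hCER3]
    have h1 := hCER
    have h2 := hCES
    rw [hMI'] at h1
    rw [h1] at h2
    linarith [h2]
  -- apply the core lemma
  have key := core
    (fun y s r => pr μ {ω | Yfut ω = y ∧ S ω = s ∧ R ω = r})
    (fun y r => pr μ {ω | Yfut ω = y ∧ R ω = r})
    (fun s r => pr μ {ω | S ω = s ∧ R ω = r})
    (fun r => pr μ {ω | R ω = r})
    (fun y s => pr μ {ω | Yfut ω = y ∧ S ω = s})
    (fun s => pr μ {ω | S ω = s})
    (fun y s r => pr_nonneg' μ _) hb hc hd he hf hCI' hEqcore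
  -- finish: each fiber of R carries at most one value of S
  unfold condEnt
  refine Finset.sum_eq_zero fun r _ => ?_
  rcases (pr_nonneg' μ {ω | R ω = r}).eq_or_lt with h0 | h0
  · rw [← h0, zero_mul]
  · have hex : ∃ s0, 0 < pr μ {ω | S ω = s0 ∧ R ω = r} := by
      by_contra hno
      push_neg at hno
      have hz : ∀ s, pr μ {ω | S ω = s ∧ R ω = r} = 0 := fun s =>
        le_antisymm (hno s) (pr_nonneg' μ _)
      rw [hd r, Finset.sum_eq_zero fun s _ => hz s] at h0
      exact lt_irrefl 0 h0
    obtain ⟨s0, hs0⟩ := hex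
    have huniq : ∀ s, 0 < pr μ {ω | S ω = s ∧ R ω = r} → s = s0 := by
      intro s hs
      have hfs : 0 < pr μ {ω | S ω = s} :=
        lt_of_lt_of_le hs (pr_mono' μ fun ω hω => hω.1)
      have hfs0 : 0 < pr μ {ω | S ω = s0} :=
        lt_of_lt_of_le hs0 (pr_mono' μ fun ω hω => hω.1)
      refine hinj s s0 hfs hfs0 fun y => ?_
      have hk := key r s s0 hs hs0 y
      rw [hcprYS, hcprYS, div_eq_div_iff hfs.ne' hfs0.ne']
      exact hk
    have hzero : ∀ s, s ≠ s0 → pr μ {ω | S ω = s ∧ R ω = r} = 0 := by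
      intro s hne
      by_contra hcne
      exact hne (huniq s (lt_of_le_of_ne (pr_nonneg' μ _) (Ne.symm hcne)))
    have hsum : pr μ {ω | S ω = s0 ∧ R ω = r} = pr μ {ω | R ω = r} := by
      rw [hd r, Finset.sum_eq_single_of_mem s0 (Finset.mem_univ s0) fun s _ h => hzero s h]
    have hCEE : condEntEvent μ S {ω | R ω = r} = 0 := by
      unfold condEntEvent
      rw [neg_eq_zero]
      refine Finset.sum_eq_zero fun s _ => ?_
      rw [hcprSR]
      rcases eq_or_ne s s0 with hs | hs
      · rw [hs, hsum, div_self h0.ne', Real.log_one, mul_zero]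
      · rw [hzero s hs, zero_div, zero_mul]
    rw [hCEE, mul_zero]
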